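/- Let M be a matroid flock on E, let α, β ∈ ℤ^E and let I ⊆ E. If I ∩ supp(β−α) = ∅ and α_i ≤ β_i for all i ∈ E, then r_α(I) ≥ r_β(I), where supp(γ) := {i ∈ E : γ_i ≠ 0} and r_γ denotes the rank function of M_γ. -/

import Mathlib

open Matroid Set

namespace FrobFlock

variable {E : Type*}

/-- The local rank function of a matroid: the size of a largest independent subset of `X`. -/
noncomputable def rk (M : Matroid E) (X : Set E) : ℕ :=
  sSup {n | ∃ I, I ⊆ X ∧ M.Indep I ∧ I.ncard = n}

/-- Deletion of the set `D` from the matroid `M`. -/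
def mdel (M : Matroid E) (D : Set E) : Matroid E := M ↾ (M.E \ D)

/-- Contraction of the set `C` in the matroid `M` (defined by duality). -/
def mcon (M : Matroid E) (C : Set E) : Matroid E := (mdel M✶ C)✶

/-- The 0/1 indicator vector of a set `I ⊆ E`. -/
noncomputable def eVec (I : Set E) : E → ℤ := I.indicator 1

/-- `M : ℤ^E → Matroid E` is a matroid flock of rank `d` on `E`:
each `M α` is a matroid on ground set `E` of rank `d`, satisfying (MF1) and (MF2). -/
def IsMatroidFlock [Fintype E] (d : ℕ) (M : (E → ℤ) → Matroid E) : Prop :=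
  (∀ α, (M α).E = Set.univ) ∧
  (∀ α, rk (M α) Set.univ = d) ∧
  (∀ α (i : E), mcon (M α) {i} = mdel (M (α + eVec {i})) {i}) ∧
  (∀ α, M α = M (α + 1))

/-- A matroid valuation `ν : binom(E,d) → ℤ ∪ {∞}`, encoded as a function on all finsets
which takes the value `⊤` outside `binom(E,d)`. -/
def IsValuation [DecidableEq E] (d : ℕ) (ν : Finset E → WithTop ℤ) : Prop :=
  (∀ B : Finset E, B.card ≠ d → ν B = ⊤) ∧
  (∃ B : Finset E, B.card = d ∧ ν B ≠ ⊤) ∧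
  (∀ B B' : Finset E, B.card = d → B'.card = d → ∀ i ∈ B \ B', ∃ j ∈ B' \ B,
      ν (insert j (B.erase i)) + ν (insert i (B'.erase j)) ≤ ν B + ν B')

/-- `B ∈ B^ν_α`: the set `B` attains the supremum `g^ν(α)`, i.e. `B` is a basis of `M^ν_α`. -/
def OptBasis (d : ℕ) (ν : Finset E → WithTop ℤ) (α : E → ℤ) (B : Finset E) : Prop :=
  B.card = d ∧ ν B ≠ ⊤ ∧ ∀ B' : Finset E, B'.card = d →
    ((∑ i ∈ B', α i : ℤ) : WithTop ℤ) + ν B ≤ ((∑ i ∈ B, α i : ℤ) : WithTop ℤ) + ν B'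


lemma indep_of_mcon_indep (N : Matroid E) (C J : Set E)
    (h : (mcon N C).Indep J) : N.Indep J := by
  rw [mcon, mdel, dual_indep_iff_exists'] at h
  obtain ⟨hJE, B, hB, hdisj⟩ := h
  rw [isBase_restrict_iff'] at hB
  have hBi : N✶.Indep B := hB.indep
  obtain ⟨B', hB', hBB'⟩ := hBi.exists_isBase_superset
  have hJB' : Disjoint J B' := by
    rw [Set.disjoint_left]
    intro x hxJ hxB'
    have hxE : x ∈ N✶.E \ C := hJE hxJ
    have hxB : x ∈ B := by
      rw [isBasis'_iff_isBasis (Set.diff_subset)] at hB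
      exact hB.mem_of_insert_indep hxE
        (hB'.indep.subset (Set.insert_subset hxB' hBB'))
    exact hdisj.ne_of_mem hxJ hxB rfl
  have hcompl : N.IsBase (N.E \ B') := hB'.compl_isBase_of_dual
  exact hcompl.indep.subset (Set.subset_diff.2 ⟨fun x hx => (hJE hx).1, hJB'⟩)

lemma rk_le_rk {N N' : Matroid E} [Fintype E] (X : Set E)
    (h : ∀ J ⊆ X, N.Indep J → N'.Indep J) : rk N X ≤ rk N' X := by
  apply csSup_le_csSup
  · refine ⟨Fintype.card E, fun n hn => ?_⟩
    obtain ⟨J, _, _, hJn⟩ := hn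
    rw [← hJn]
    calc J.ncard ≤ (Set.univ : Set E).ncard :=
          Set.ncard_le_ncard (Set.subset_univ J) Set.finite_univ
    _ = Fintype.card E := by rw [Set.ncard_univ, Nat.card_eq_fintype_card]
  · exact ⟨0, ∅, Set.empty_subset _, N.empty_indep, Set.ncard_empty _⟩
  · rintro n ⟨J, hJX, hJi, hJn⟩
    exact ⟨J, hJX, h J hJX hJi, hJn⟩


lemma step [Fintype E] (d : ℕ) (M : (E → ℤ) → Matroid E) (hM : IsMatroidFlock d M)
    (α : E → ℤ) (i : E) (I : Set E) (hi : i ∉ I) :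
    rk (M (α + eVec {i})) I ≤ rk (M α) I := by
  apply rk_le_rk
  intro J hJX hJ
  apply indep_of_mcon_indep (M α) {i}
  rw [hM.2.2.1 α i, mdel, restrict_indep_iff]
  refine ⟨hJ, ?_⟩
  rw [hM.1]
  exact fun x hx => ⟨trivial, fun hxi => hi (hxi ▸ hJX hx)⟩

lemma aux [Fintype E] (d : ℕ) (M : (E → ℤ) → Matroid E) (hM : IsMatroidFlock d M)
    (I : Set E) : ∀ (n : ℕ) (α β : E → ℤ), α ≤ β → (∀ i ∈ I, β i = α i) →
    (∑ i, (β i - α i).toNat = n) → rk (M β) I ≤ rk (M α) I := by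
  intro n
  induction n with
  | zero =>
    intro α β hle hI hsum
    have : β = α := by
      funext j
      have h1 : (β j - α j).toNat = 0 :=
        Finset.sum_eq_zero_iff.1 hsum j (Finset.mem_univ j)
      have h2 : α j ≤ β j := hle j
      omega
    rw [this]
  | succ n ih =>
    intro α β hle hI hsum
    classical
    have hne : ∃ i, (β i - α i).toNat ≠ 0 := by
      by_contra h
      push_neg at h
      rw [Finset.sum_eq_zero (fun i _ => h i)] at hsum
      omega
    obtain ⟨i, hi⟩ := hne
    have hlt : α i < β i := by have := hle i; omega
    have hiI : i ∉ I := fun h => by have := hI i h; omega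
    set α' := α + eVec {i} with hα'
    have heval : ∀ j, α' j = α j + (if j = i then 1 else 0) := by
      intro j
      by_cases h : j = i
      · subst h; simp [hα', eVec]
      · simp [hα', eVec, h]
    have hle' : α' ≤ β := by
      intro j
      show α' j ≤ β j
      rw [heval j]
      split_ifs with h
      · subst h; omega
      · have h2 : α j ≤ β j := hle j; omega
    have hI' : ∀ j ∈ I, β j = α' j := by
      intro j hj
      have hji : j ≠ i := fun h => hiI (h ▸ hj)
      rw [heval j, if_neg hji, add_zero]
      exact hI j hj
    have hsum' : ∑ j, (β j - α' j).toNat = n := by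
      have key : ∀ j, (β j - α' j).toNat =
          (β j - α j).toNat - (if j = i then 1 else 0) := by
        intro j
        rw [heval j]
        split_ifs with h <;> omega
      calc ∑ j, (β j - α' j).toNat
          = ∑ j, ((β j - α j).toNat - (if j = i then 1 else 0)) :=
            Finset.sum_congr rfl (fun j _ => key j)
        _ = n := by
            rw [← Finset.add_sum_erase _ _ (Finset.mem_univ i)] at hsum ⊢
            have hrest : ∑ j ∈ Finset.univ.erase i,
                ((β j - α j).toNat - (if j = i then 1 else 0)) =
                ∑ j ∈ Finset.univ.erase i, (β j - α j).toNat := by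
              apply Finset.sum_congr rfl
              intro j hj
              rw [if_neg (Finset.ne_of_mem_erase hj), Nat.sub_zero]
            rw [hrest, if_pos rfl]
            omega
    calc rk (M β) I ≤ rk (M α') I := ih α' β hle' hI' hsum'
      _ ≤ rk (M α) I := step d M hM α i I hiI


/-- **Lemma.** Let `M` be a matroid flock on `E`, let `α, β ∈ ℤ^E` and let `I ⊆ E`.
If `I ∩ supp(β − α) = ∅` and `α ≤ β`, then `r_α(I) ≥ r_β(I)`. -/
theorem flock_rank_antitone [Fintype E] (d : ℕ) (M : (E → ℤ) → Matroid E)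
    (hM : IsMatroidFlock d M) (α β : E → ℤ) (I : Set E)
    (hsupp : I ∩ {i | β i - α i ≠ 0} = ∅) (hle : α ≤ β) :
    rk (M β) I ≤ rk (M α) I := by
  apply aux d M hM I (∑ i, (β i - α i).toNat) α β hle _ rfl
  intro i hiI
  by_contra h
  have : i ∈ I ∩ {i | β i - α i ≠ 0} := ⟨hiI, fun h' => h (by omega)⟩
  rw [hsupp] at this
  exact this


end FrobFlock
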